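/- Under the same setting as the hitting-time bound: let $\{Z_t\}$ be geometrically mixing with constants $(C, \rho)$, $z$ a state with $\sigma(z) > 0$, $t_{\mathrm{mix}} = \lceil \log_\rho(\sigma(z)/(2C)) \rceil$, $\gamma \in (0,1)$, and $\tau$ the truncated first hitting time of $z$ within horizon $n$. Then for any initial state, $\mathbb{E}[\gamma^{n - \tau}] \le 2(n+1)\left[\gamma^{n-1} + \left(1 - \frac{\sigma(z)}{2 t_{\mathrm{mix}}}\right)^{n-1}\right]$. -/

import Mathlib

set_option linter.unusedSectionVars false
set_option maxHeartbeats 1000000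

open Finset

/-- `t`-step transition probabilities of a finite Markov chain with kernel `K`. -/
noncomputable def kpow {Z : Type*} [Fintype Z] [DecidableEq Z]
    (K : Z → Z → ℝ) : ℕ → Z → Z → ℝ
  | 0, z0, z' => if z0 = z' then 1 else 0
  | t + 1, z0, z' => ∑ u, K z0 u * kpow K t u z'

/-- `hitProb K z i z0` is the probability that the chain started at `z0` visits `z`
for the first time at time `i`. -/
noncomputable def hitProb {Z : Type*} [Fintype Z] [DecidableEq Z]
    (K : Z → Z → ℝ) (z : Z) : ℕ → Z → ℝ
  | 0, z0 => if z0 = z then 1 else 0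
  | i + 1, z0 => if z0 = z then 0 else ∑ u, K z0 u * hitProb K z i u


section aux
variable {Z : Type*} [Fintype Z] [DecidableEq Z] (K : Z → Z → ℝ) (z : Z)

/-- survival probability: no visit to `z` at times `0,...,k-1`. -/
noncomputable def surv : ℕ → Z → ℝ
  | 0, _ => 1
  | k + 1, z0 => if z0 = z then 0 else ∑ u, K z0 u * surv k u

variable (hK0 : ∀ z z', 0 ≤ K z z') (hK1 : ∀ z, ∑ z', K z z' = 1)
include hK0

lemma kpow_nonneg : ∀ t z0 z', 0 ≤ kpow K t z0 z'
  | 0, z0, z' => by simp [kpow]; split <;> norm_num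
  | t + 1, z0, z' => Finset.sum_nonneg fun u _ =>
      mul_nonneg (hK0 _ _) (kpow_nonneg t u z')

include hK1

lemma kpow_rowsum : ∀ t z0, ∑ z', kpow K t z0 z' = 1
  | 0, z0 => by simp [kpow]
  | t + 1, z0 => by
      simp only [kpow]
      rw [Finset.sum_comm]
      simp_rw [← Finset.mul_sum, kpow_rowsum t, mul_one, hK1]

lemma kpow_le_one (t : ℕ) (z0 z' : Z) : kpow K t z0 z' ≤ 1 := by
  rw [← kpow_rowsum K hK0 hK1 t z0]
  exact Finset.single_le_sum (fun u _ => kpow_nonneg K hK0 t z0 u) (mem_univ z')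

omit hK1

lemma hitProb_nonneg : ∀ i z0, 0 ≤ hitProb K z i z0
  | 0, z0 => by simp [hitProb]; split <;> norm_num
  | i + 1, z0 => by
      simp only [hitProb]
      split
      · exact le_refl _
      · exact Finset.sum_nonneg fun u _ => mul_nonneg (hK0 _ _) (hitProb_nonneg i u)

lemma surv_nonneg : ∀ k z0, 0 ≤ surv K z k z0
  | 0, _ => by simp [surv]
  | k + 1, z0 => by
      simp only [surv]
      split
      · exact le_refl _
      · exact Finset.sum_nonneg fun u _ => mul_nonneg (hK0 _ _) (surv_nonneg k u)

include hK1

lemma surv_le_one : ∀ k z0, surv K z k z0 ≤ 1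
  | 0, _ => by simp [surv]
  | k + 1, z0 => by
      simp only [surv]
      split
      · norm_num
      · calc ∑ u, K z0 u * surv K z k u ≤ ∑ u, K z0 u * 1 :=
              Finset.sum_le_sum fun u _ =>
                mul_le_mul_of_nonneg_left (surv_le_one k u) (hK0 _ _)
          _ = 1 := by simp [hK1]

lemma surv_succ_le : ∀ k z0, surv K z (k + 1) z0 ≤ surv K z k z0
  | 0, z0 => surv_le_one K z hK0 hK1 1 z0
  | k + 1, z0 => by
      simp only [surv]
      split
      · exact le_refl _
      · exact Finset.sum_le_sum fun u _ =>
          mul_le_mul_of_nonneg_left (surv_succ_le k u) (hK0 _ _)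

lemma surv_anti {j k : ℕ} (h : j ≤ k) (z0 : Z) : surv K z k z0 ≤ surv K z j z0 := by
  induction k with
  | zero => simp_all
  | succ k ih =>
      rcases Nat.lt_or_ge j (k+1) with h' | h'
      · exact le_trans (surv_succ_le K z hK0 hK1 k z0) (ih (Nat.lt_succ_iff.mp h'))
      · have : j = k + 1 := le_antisymm h h'
        simp [this]

lemma sum_hitProb_add_surv : ∀ k z0,
    (∑ i ∈ Finset.range k, hitProb K z i z0) + surv K z k z0 = 1
  | 0, z0 => by simp [surv]
  | k + 1, z0 => by
      rw [Finset.sum_range_succ']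
      by_cases hz0 : z0 = z
      · simp only [hitProb, surv, hz0, if_pos rfl]
        simp
      · simp only [hitProb, surv, if_neg hz0]
        rw [add_zero]
        have : ∀ u, (∑ i ∈ Finset.range k, hitProb K z i u) = 1 - surv K z k u :=
          fun u => by linarith [sum_hitProb_add_surv k u]
        calc (∑ i ∈ Finset.range k, ∑ u, K z0 u * hitProb K z i u)
              + ∑ u, K z0 u * surv K z k u
            = ∑ u, (K z0 u * ∑ i ∈ Finset.range k, hitProb K z i u
                + K z0 u * surv K z k u) := by
              rw [Finset.sum_comm]
              rw [← Finset.sum_add_distrib]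
              simp_rw [Finset.mul_sum]
          _ = ∑ u, K z0 u := by
              refine Finset.sum_congr rfl fun u _ => ?_
              rw [this u]; ring
          _ = 1 := hK1 z0

lemma surv_le_one_sub_kpow : ∀ t z0, surv K z (t + 1) z0 ≤ 1 - kpow K t z0 z
  | 0, z0 => by
      simp only [surv, kpow]
      by_cases hz0 : z0 = z <;> simp [hz0, hK1 z0]
  | t + 1, z0 => by
      simp only [surv, kpow]
      by_cases hz0 : z0 = z
      · simp only [if_pos hz0]
        have h1 : ∑ u, K z0 u * kpow K t u z ≤ ∑ u, K z0 u * 1 :=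
          Finset.sum_le_sum fun u _ =>
            mul_le_mul_of_nonneg_left (kpow_le_one K hK0 hK1 t u z) (hK0 _ _)
        simp only [mul_one, hK1 z0] at h1
        linarith
      · simp only [if_neg hz0]
        calc ∑ u, K z0 u * surv K z (t + 1) u
            ≤ ∑ u, K z0 u * (1 - kpow K t u z) :=
              Finset.sum_le_sum fun u _ =>
                mul_le_mul_of_nonneg_left (surv_le_one_sub_kpow t u) (hK0 _ _)
          _ = 1 - ∑ u, K z0 u * kpow K t u z := by
              simp_rw [mul_sub, Finset.sum_sub_distrib, mul_one, hK1 z0]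

lemma surv_add_le : ∀ t k z0,
    surv K z (t + k) z0 ≤ ∑ u, kpow K t z0 u * surv K z k u
  | 0, k, z0 => by
      simp [kpow, Nat.zero_add, ite_mul, one_mul, zero_mul, Finset.sum_ite_eq,
        Finset.mem_univ, if_true]
  | t + 1, k, z0 => by
      have heq : t + 1 + k = (t + k) + 1 := by omega
      rw [heq]
      simp only [surv, kpow]
      by_cases hz0 : z0 = z
      · simp only [if_pos hz0]
        exact Finset.sum_nonneg fun u _ => mul_nonneg
          (Finset.sum_nonneg fun v _ => mul_nonneg (hK0 _ _) (kpow_nonneg K hK0 t v u))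
          (surv_nonneg K z hK0 k u)
      · simp only [if_neg hz0]
        calc ∑ v, K z0 v * surv K z (t + k) v
            ≤ ∑ v, K z0 v * ∑ u, kpow K t v u * surv K z k u :=
              Finset.sum_le_sum fun v _ =>
                mul_le_mul_of_nonneg_left (surv_add_le t k v) (hK0 _ _)
          _ = ∑ u, (∑ v, K z0 v * kpow K t v u) * surv K z k u := by
              simp_rw [Finset.mul_sum]
              rw [Finset.sum_comm]
              simp_rw [Finset.sum_mul, mul_assoc]

end aux

lemma surv_eq_zero {Z : Type*} [Fintype Z] [DecidableEq Z] (K : Z → Z → ℝ) (z : Z)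
    (k : ℕ) : surv K z (k + 1) z = 0 := by simp [surv]

section aux2
variable {Z : Type*} [Fintype Z] [DecidableEq Z] (K : Z → Z → ℝ) (z : Z)
variable (hK0 : ∀ z z', 0 ≤ K z z') (hK1 : ∀ z, ∑ z', K z z' = 1)
include hK0 hK1

lemma surv_block (β : ℝ) (hβ0 : 0 ≤ β) (tmix : ℕ)
    (hblock : ∀ z0, 1 - kpow K tmix z0 z ≤ β) :
    ∀ a z0, surv K z (a * tmix + 1) z0 ≤ if z0 = z then 0 else β ^ a
  | 0, z0 => by
      simp only [surv, Nat.zero_mul, Nat.zero_add, pow_zero, mul_one]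
      split
      · exact le_refl _
      · simp [hK1 z0]
  | a + 1, z0 => by
      by_cases hz0 : z0 = z
      · subst hz0
        have h0 : (a + 1) * tmix + 1 = ((a + 1) * tmix) + 1 := rfl
        rw [h0, surv_eq_zero, if_pos rfl]
      · rw [if_neg hz0]
        have heq : (a + 1) * tmix + 1 = tmix + (a * tmix + 1) := by ring
        rw [heq]
        calc surv K z (tmix + (a * tmix + 1)) z0
            ≤ ∑ u, kpow K tmix z0 u * surv K z (a * tmix + 1) u :=
              surv_add_le K z hK0 hK1 tmix (a * tmix + 1) z0
          _ ≤ ∑ u, kpow K tmix z0 u * (if u = z then 0 else β ^ a) :=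
              Finset.sum_le_sum fun u _ =>
                mul_le_mul_of_nonneg_left (surv_block β hβ0 tmix hblock a u)
                  (kpow_nonneg K hK0 tmix z0 u)
          _ = (∑ u, kpow K tmix z0 u * β ^ a)
                - (∑ u, if u = z then kpow K tmix z0 u * β ^ a else 0) := by
              rw [← Finset.sum_sub_distrib]
              refine Finset.sum_congr rfl fun u _ => ?_
              split <;> simp
          _ = (1 - kpow K tmix z0 z) * β ^ a := by
              rw [Finset.sum_ite_eq' Finset.univ z (fun u => kpow K tmix z0 u * β ^ a)]
              rw [← Finset.sum_mul, kpow_rowsum K hK0 hK1 tmix z0]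
              simp [sub_mul]
          _ ≤ β * β ^ a :=
              mul_le_mul_of_nonneg_right (hblock z0) (pow_nonneg hβ0 a)
          _ = β ^ (a + 1) := (pow_succ' β a).symm

end aux2


/-- with `τ` the first hitting time of `z` truncated at horizon `n`
(so `ℙ(τ = i) = hitProb K z i z0` for `i ≤ n - 1` and `ℙ(τ = n)` the remaining mass),
`𝔼[γ^(n - τ)] ≤ 2 (n+1) (γ^(n-1) + (1 - σ z / (2 t_mix))^(n-1))`. -/
theorem exp_gamma_hitting_bound {Z : Type*} [Fintype Z] [DecidableEq Z]
    (K : Z → Z → ℝ) (σ : Z → ℝ) (C ρ γ : ℝ)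
    (hK0 : ∀ z z', 0 ≤ K z z') (hK1 : ∀ z, ∑ z', K z z' = 1)
    (hσ0 : ∀ z, 0 ≤ σ z) (hσ1 : ∑ z, σ z = 1)
    (hstat : ∀ z', ∑ z, σ z * K z z' = σ z')
    (hC : 0 < C) (hρ0 : 0 < ρ) (hρ1 : ρ < 1)
    (hγ0 : 0 < γ) (hγ1 : γ < 1)
    (hmix : ∀ (t : ℕ) (z0 : Z), ∑ z', |kpow K t z0 z' - σ z'| ≤ C * ρ ^ t)
    (z : Z) (hz : 0 < σ z)
    (tmix : ℕ) (htmix : tmix = ⌈Real.log (σ z / (2 * C)) / Real.log ρ⌉₊)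
    (n : ℕ) (hn : 1 ≤ n) (z0 : Z) :
    (∑ i ∈ Finset.range n, γ ^ (n - i) * hitProb K z i z0)
        + (1 - ∑ i ∈ Finset.range n, hitProb K z i z0)
      ≤ 2 * (n + 1) * (γ ^ (n - 1) + (1 - σ z / (2 * tmix)) ^ (n - 1)) := by
  have hσz1 : σ z ≤ 1 := by
    rw [← hσ1]; exact Finset.single_le_sum (fun u _ => hσ0 u) (Finset.mem_univ z)
  have hsum : (∑ i ∈ Finset.range n, hitProb K z i z0) = 1 - surv K z n z0 := by
    linarith [sum_hitProb_add_surv K z hK0 hK1 n z0]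
  rw [hsum, sub_sub_cancel]
  by_cases ht0 : tmix = 0
  · -- trivial case: α = 1
    have hα : (1 - σ z / (2 * (tmix : ℝ))) = 1 := by
      rw [ht0]; norm_num
    rw [hα, one_pow]
    have hLHS : (∑ i ∈ Finset.range n, γ ^ (n - i) * hitProb K z i z0)
        + surv K z n z0 ≤ 1 := by
      have h1 : ∀ i ∈ Finset.range n, γ ^ (n - i) * hitProb K z i z0
          ≤ hitProb K z i z0 := fun i _ => by
        have := hitProb_nonneg K z hK0 i z0
        nlinarith [(pow_le_one₀ hγ0.le hγ1.le : γ ^ (n - i) ≤ 1)]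
      calc (∑ i ∈ Finset.range n, γ ^ (n - i) * hitProb K z i z0) + surv K z n z0
          ≤ (∑ i ∈ Finset.range n, hitProb K z i z0) + surv K z n z0 := by
            linarith [Finset.sum_le_sum h1]
        _ = 1 := sum_hitProb_add_surv K z hK0 hK1 n z0
    have hg : 0 ≤ γ ^ (n - 1) := pow_nonneg hγ0.le _
    have hn1 : (1 : ℝ) ≤ (n : ℝ) := by exact_mod_cast hn
    nlinarith
  · -- main case: tmix ≥ 1
    have htm1 : 1 ≤ tmix := Nat.one_le_iff_ne_zero.mpr ht0
    have htmR : (1 : ℝ) ≤ (tmix : ℝ) := by exact_mod_cast htm1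
    set α : ℝ := 1 - σ z / (2 * tmix) with hαdef
    clear_value α
    have hα0 : 1/2 ≤ α := by
      have : σ z / (2 * (tmix : ℝ)) ≤ σ z / 2 := by
        apply div_le_div_of_nonneg_left hz.le (by norm_num) (by linarith)
      have h2 : σ z / 2 ≤ 1/2 := by linarith
      simp only [hαdef]; linarith
    have hα1 : α ≤ 1 := by
      have : 0 < σ z / (2 * (tmix : ℝ)) := by positivity
      simp only [hαdef]; linarith
    -- ρ ^ tmix ≤ σ z / (2C)
    have hρtm : ρ ^ tmix ≤ σ z / (2 * C) := by
      have hy : 0 < σ z / (2 * C) := by positivity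
      have hlρ : Real.log ρ < 0 := Real.log_neg hρ0 hρ1
      have h1 : Real.log (σ z / (2 * C)) / Real.log ρ ≤ (tmix : ℝ) := by
        rw [htmix]; exact Nat.le_ceil _
      have h2 : (tmix : ℝ) * Real.log ρ ≤ Real.log (σ z / (2 * C)) := by
        rwa [div_le_iff_of_neg hlρ] at h1
      have h3 : ρ ^ tmix = Real.exp ((tmix : ℝ) * Real.log ρ) := by
        rw [← Real.log_pow, Real.exp_log (pow_pos hρ0 tmix)]
      rw [h3, ← Real.exp_log hy]
      exact Real.exp_le_exp.mpr h2
    -- block bound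
    have hblock : ∀ z0', 1 - kpow K tmix z0' z ≤ 1 - σ z / 2 := by
      intro z0'
      have habs : |kpow K tmix z0' z - σ z| ≤ C * ρ ^ tmix :=
        le_trans (Finset.single_le_sum
          (fun u (_ : u ∈ Finset.univ) => abs_nonneg (kpow K tmix z0' u - σ u))
          (Finset.mem_univ z)) (hmix tmix z0')
      have h1 : σ z - C * ρ ^ tmix ≤ kpow K tmix z0' z := by
        have := (abs_le.mp habs).1; linarith
      have h2 : C * ρ ^ tmix ≤ σ z / 2 := by
        have := mul_le_mul_of_nonneg_left hρtm hC.le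
        have hC' : C * (σ z / (2 * C)) = σ z / 2 := by field_simp
        linarith [hC' ▸ this]
      linarith
    have hβ0 : (1:ℝ)/2 ≤ 1 - σ z / 2 := by linarith
    -- Bernoulli: 1 - σz/2 ≤ α ^ tmix
    have hber : 1 - σ z / 2 ≤ α ^ tmix := by
      have hts : (tmix : ℝ) * (σ z / (2 * tmix)) = σ z / 2 := by
        field_simp
      have h := one_add_mul_le_pow (a := -(σ z / (2 * (tmix : ℝ))))
        (by nlinarith) tmix
      have he : (1 : ℝ) + -(σ z / (2 * (tmix : ℝ))) = α := by simp [hαdef]; ring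
      rw [he] at h
      calc 1 - σ z / 2 = 1 + (tmix : ℝ) * -(σ z / (2 * tmix)) := by
            rw [mul_neg, hts]; ring
        _ ≤ α ^ tmix := h
    -- tail bound
    have tail : ∀ k, 1 ≤ k → ∀ z0', surv K z k z0' ≤ 2 * α ^ (k - 1) := by
      intro k hk z0'
      set a := (k - 1) / tmix with ha
      set e := (k - 1) % tmix with he
      have hde : tmix * a + e = k - 1 := Nat.div_add_mod (k - 1) tmix
      have helt : e < tmix := Nat.mod_lt _ htm1
      have h1 : a * tmix + 1 ≤ k := by
        have h := Nat.div_mul_le_self (k - 1) tmix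
        rw [← ha] at h
        omega
      have h2 : surv K z k z0' ≤ (1 - σ z / 2) ^ a := by
        refine le_trans (surv_anti K z hK0 hK1 h1 z0') ?_
        refine le_trans (surv_block K z hK0 hK1 (1 - σ z / 2) (by linarith) tmix
          hblock a z0') ?_
        split
        · positivity
        · exact le_refl _
      have h3 : (1 - σ z / 2) ^ a ≤ α ^ (tmix * a) := by
        rw [pow_mul]
        exact pow_le_pow_left₀ (by linarith) hber a
      have h4 : α ^ (k - 1) = α ^ (tmix * a) * α ^ e := by
        rw [← pow_add]; congr 1; omega
      have h5 : (1:ℝ)/2 ≤ α ^ e := by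
        calc (1:ℝ)/2 ≤ α ^ tmix := le_trans hβ0 hber
          _ ≤ α ^ e := pow_le_pow_of_le_one (by linarith) hα1 helt.le
      have h6 : 0 ≤ α ^ (tmix * a) := pow_nonneg (by linarith) _
      nlinarith
    -- per-term bound
    set B : ℝ := 2 * (γ ^ (n - 1) + α ^ (n - 1)) with hB
    clear_value B
    have hαnn : 0 ≤ α ^ (n - 1) := pow_nonneg (by linarith) _
    have hγnn : 0 ≤ γ ^ (n - 1) := pow_nonneg hγ0.le _
    have hterm : ∀ i ∈ Finset.range n, γ ^ (n - i) * hitProb K z i z0 ≤ B := by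
      intro i hi
      have hiln : i < n := Finset.mem_range.mp hi
      have hhnn := hitProb_nonneg K z hK0 i z0
      have hit_le : hitProb K z i z0 ≤ surv K z i z0 := by
        have h1 := sum_hitProb_add_surv K z hK0 hK1 i z0
        have h2 := sum_hitProb_add_surv K z hK0 hK1 (i + 1) z0
        rw [Finset.sum_range_succ] at h2
        have h3 := surv_nonneg K z hK0 (i + 1) z0
        linarith
      rcases Nat.eq_zero_or_pos i with hi0 | hi1
      · subst hi0
        have hs0 : surv K z 0 z0 = 1 := rfl
        have h1 : γ ^ (n - 0) * hitProb K z 0 z0 ≤ γ ^ n := by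
          have := pow_nonneg hγ0.le n
          simp only [Nat.sub_zero]
          nlinarith [hs0 ▸ hit_le]
        have h2 : γ ^ n ≤ γ ^ (n - 1) :=
          pow_le_pow_of_le_one hγ0.le hγ1.le (Nat.sub_le n 1)
        simp only [hB]; linarith
      · have h1 : surv K z i z0 ≤ 2 * α ^ (i - 1) := tail i hi1 z0
        set M : ℝ := max γ α with hM
        clear_value M
        have hMγ : γ ≤ M := by rw [hM]; exact le_max_left _ _
        have hMα : α ≤ M := by rw [hM]; exact le_max_right _ _
        have hM0 : 0 ≤ M := le_trans hγ0.le hMγ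
        have h2 : γ ^ (n - i) * α ^ (i - 1) ≤ M ^ (n - 1) := by
          calc γ ^ (n - i) * α ^ (i - 1) ≤ M ^ (n - i) * M ^ (i - 1) :=
                mul_le_mul (pow_le_pow_left₀ hγ0.le hMγ _)
                  (pow_le_pow_left₀ (by linarith) hMα _)
                  (pow_nonneg (by linarith) _) (pow_nonneg hM0 _)
            _ = M ^ (n - 1) := by rw [← pow_add]; congr 1; omega
        have h3 : M ^ (n - 1) ≤ γ ^ (n - 1) + α ^ (n - 1) := by
          rcases max_cases γ α with ⟨hMe, _⟩ | ⟨hMe, _⟩ <;> rw [hM, hMe] <;> linarith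
        have hγp : 0 ≤ γ ^ (n - i) := pow_nonneg hγ0.le _
        calc γ ^ (n - i) * hitProb K z i z0
            ≤ γ ^ (n - i) * (2 * α ^ (i - 1)) := by
              nlinarith [le_trans hit_le h1]
          _ = 2 * (γ ^ (n - i) * α ^ (i - 1)) := by ring
          _ ≤ 2 * M ^ (n - 1) := by linarith
          _ ≤ B := by simp only [hB]; linarith
    have hlast : surv K z n z0 ≤ B := by
      have := tail n hn z0
      simp only [hB]; linarith
    calc (∑ i ∈ Finset.range n, γ ^ (n - i) * hitProb K z i z0) + surv K z n z0
        ≤ (∑ i ∈ Finset.range n, B) + B := by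
          linarith [Finset.sum_le_sum hterm]
      _ = (n + 1) * B := by
          rw [Finset.sum_const, Finset.card_range, nsmul_eq_mul]; ring
      _ = 2 * (n + 1) * (γ ^ (n - 1) + α ^ (n - 1)) := by rw [hB]; ring
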